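/- For a ≥ 2 and n ≥ a, the unique graph of order n with χ_igp(G) = a and maximum number of edges is the complete a-partite Turán graph T_a(n). -/

import Mathlib

open SimpleGraph

/-- A set `S` is in general position: no shortest path contains more than two vertices of `S`. -/
def IsGenPosSet {V : Type*} (G : SimpleGraph V) (S : Set V) : Prop :=
  ∀ ⦃u v : V⦄ (p : G.Walk u v), p.IsPath → p.length = G.dist u v →
    ∀ x y z, x ∈ S → y ∈ S → z ∈ S →
      x ∈ p.support → y ∈ p.support → z ∈ p.support →
      x = y ∨ y = z ∨ x = z

/-- `G` can be coloured with `k` colours so that every colour class is in general position. -/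
def GpColorable {V : Type*} (G : SimpleGraph V) (k : ℕ) : Prop :=
  ∃ c : V → Fin k, ∀ i, IsGenPosSet G {v | c v = i}

/-- The gp-chromatic number: least number of colours in a colouring whose classes are
general position sets. -/
noncomputable def gpChromatic {V : Type*} (G : SimpleGraph V) : ℕ :=
  sInf {k | GpColorable G k}

/-- The igp-chromatic number: least number of colours so that each colour class is an
independent set in general position. -/
noncomputable def igpChromatic {V : Type*} (G : SimpleGraph V) : ℕ :=
  sInf {k | ∃ c : V → Fin k, ∀ i,
    ({v | c v = i} : Set V).Pairwise (fun u w => ¬ G.Adj u w) ∧ IsGenPosSet G {v | c v = i}}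

lemma succ_mod_ne (a x : ℕ) (ha : 2 ≤ a) : (x + 1) % a ≠ x % a := by
  intro h
  have h2 : x ≡ x + 1 [MOD a] := h.symm
  have := (Nat.modEq_iff_dvd' (Nat.le_succ x)).mp h2
  simp at this
  omega

lemma turan_dist_le (a n : ℕ) (ha : 2 ≤ a) (hn : a ≤ n) (u v : Fin n) :
    (turanGraph n a).dist u v ≤ 2 := by
  by_cases huv : u = v
  · subst huv; rw [SimpleGraph.dist_self]; omega
  by_cases hadj : (turanGraph n a).Adj u v
  · calc (turanGraph n a).dist u v ≤ (hadj.toWalk).length := SimpleGraph.dist_le _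
      _ ≤ 2 := by simp
  · have hmod : (u : ℕ) % a = (v : ℕ) % a := by
      by_contra h; exact hadj h
    have hlt : ((u : ℕ) + 1) % a < n := lt_of_lt_of_le (Nat.mod_lt _ (by omega)) hn
    set w : Fin n := ⟨((u : ℕ) + 1) % a, hlt⟩ with hw
    have hwa : (w : ℕ) % a = ((u : ℕ) + 1) % a := Nat.mod_mod_of_dvd _ dvd_rfl
    have h1 : (turanGraph n a).Adj u w := by
      show (u : ℕ) % a ≠ (w : ℕ) % a
      rw [hwa]; exact fun h => succ_mod_ne a u ha h.symm
    have h2 : (turanGraph n a).Adj w v := by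
      show (w : ℕ) % a ≠ (v : ℕ) % a
      rw [hwa, ← hmod]; exact succ_mod_ne a u ha
    calc (turanGraph n a).dist u v ≤ (SimpleGraph.Walk.cons h1 h2.toWalk).length :=
        SimpleGraph.dist_le _
      _ ≤ 2 := by simp

lemma turan_genpos (a n : ℕ) (ha : 2 ≤ a) (hn : a ≤ n) (i : ℕ) :
    IsGenPosSet (turanGraph n a) {v : Fin n | (v : ℕ) % a = i} := by
  intro u v p hp hlen x y z hx hy hz hxs hys hzs
  simp only [Set.mem_setOf_eq] at hx hy hz
  have hl : p.length ≤ 2 := hlen ▸ turan_dist_le a n ha hn u v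
  match p with
  | SimpleGraph.Walk.nil =>
    simp only [SimpleGraph.Walk.support_nil, List.mem_singleton] at hxs hys hzs
    subst hxs hys; tauto
  | SimpleGraph.Walk.cons h SimpleGraph.Walk.nil =>
    simp only [SimpleGraph.Walk.support_cons, SimpleGraph.Walk.support_nil,
      List.mem_cons, List.mem_singleton, List.not_mem_nil, or_false] at hxs hys hzs
    rcases hxs with rfl | rfl <;> rcases hys with rfl | rfl <;> rcases hzs with rfl | rfl <;> tauto
  | SimpleGraph.Walk.cons (v := b) h (SimpleGraph.Walk.cons h' SimpleGraph.Walk.nil) =>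
    have hab : (u : ℕ) % a ≠ (b : ℕ) % a := h
    have hbv : (b : ℕ) % a ≠ (v : ℕ) % a := h'
    simp only [SimpleGraph.Walk.support_cons, SimpleGraph.Walk.support_nil,
      List.mem_cons, List.mem_singleton, List.not_mem_nil, or_false] at hxs hys hzs
    rcases hxs with rfl | rfl | rfl <;> rcases hys with rfl | rfl | rfl <;>
      rcases hzs with rfl | rfl | rfl <;> first | tauto | simp_all
  | SimpleGraph.Walk.cons h (SimpleGraph.Walk.cons h' (SimpleGraph.Walk.cons h'' q)) =>
    simp at hl

/-- For `a ≥ 2` and `n ≥ a`, the unique graph of order `n` with `χ_igp = a` and the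
maximum number of edges is the Turán graph `T_a(n)`. -/
theorem igp_turan_extremal (a n : ℕ) (ha : 2 ≤ a) (hn : a ≤ n) :
    igpChromatic (turanGraph n a) = a ∧
      ∀ G : SimpleGraph (Fin n), igpChromatic G = a →
        G.edgeSet.ncard ≤ (turanGraph n a).edgeSet.ncard ∧
          (G.edgeSet.ncard = (turanGraph n a).edgeSet.ncard →
            Nonempty (G ≃g turanGraph n a)) := by
  classical
  have ha0 : 0 < a := by omega
  have hcard : ∀ (H : SimpleGraph (Fin n)) [DecidableRel H.Adj],
      H.edgeSet.ncard = H.edgeFinset.card := by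
    intro H _
    rw [← SimpleGraph.coe_edgeFinset, Set.ncard_coe_finset]
  constructor
  · have hmem : a ∈ {k | ∃ c : Fin n → Fin k, ∀ i,
        ({v | c v = i} : Set (Fin n)).Pairwise (fun u w => ¬ (turanGraph n a).Adj u w) ∧
          IsGenPosSet (turanGraph n a) {v | c v = i}} := by
      refine ⟨fun v => ⟨(v : ℕ) % a, Nat.mod_lt _ ha0⟩, fun i => ⟨?_, ?_⟩⟩
      · intro u hu w hw huw hadj
        simp only [Set.mem_setOf_eq, Fin.ext_iff] at hu hw
        exact hadj (hu.trans hw.symm)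
      · have hset : {v : Fin n | (⟨(v : ℕ) % a, Nat.mod_lt _ ha0⟩ : Fin a) = i}
            = {v : Fin n | (v : ℕ) % a = (i : ℕ)} := by
          ext v; simp [Fin.ext_iff]
        rw [hset]
        exact turan_genpos a n ha hn i
    have hlb : ∀ k ∈ {k | ∃ c : Fin n → Fin k, ∀ i,
        ({v | c v = i} : Set (Fin n)).Pairwise (fun u w => ¬ (turanGraph n a).Adj u w) ∧
          IsGenPosSet (turanGraph n a) {v | c v = i}}, a ≤ k := by
      rintro k ⟨c, hc⟩
      have hinj : Function.Injective
          (fun i : Fin a => c ⟨(i : ℕ), lt_of_lt_of_le i.2 hn⟩) := by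
        intro i j hij
        by_contra hne
        have hvne : (⟨(i : ℕ), lt_of_lt_of_le i.2 hn⟩ : Fin n)
            ≠ ⟨(j : ℕ), lt_of_lt_of_le j.2 hn⟩ := by
          intro h
          exact hne (Fin.ext (by simpa [Fin.ext_iff] using h))
        have hadj : (turanGraph n a).Adj ⟨(i : ℕ), lt_of_lt_of_le i.2 hn⟩
            ⟨(j : ℕ), lt_of_lt_of_le j.2 hn⟩ := by
          show (i : ℕ) % a ≠ (j : ℕ) % a
          rw [Nat.mod_eq_of_lt i.2, Nat.mod_eq_of_lt j.2]
          exact fun h => hne (Fin.ext h)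
        exact (hc (c ⟨(i : ℕ), lt_of_lt_of_le i.2 hn⟩)).1 rfl hij.symm hvne hadj
      have := Fintype.card_le_of_injective _ hinj
      simpa using this
    exact le_antisymm (Nat.sInf_le hmem) (le_csInf ⟨a, hmem⟩ hlb)
  · intro G hG
    have hSne : {k | ∃ c : Fin n → Fin k, ∀ i,
        ({v | c v = i} : Set (Fin n)).Pairwise (fun u w => ¬ G.Adj u w) ∧
          IsGenPosSet G {v | c v = i}}.Nonempty := by
      by_contra h
      rw [Set.not_nonempty_iff_eq_empty] at h
      rw [igpChromatic, h, Nat.sInf_empty] at hG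
      omega
    have hamem := Nat.sInf_mem hSne
    rw [show sInf {k | ∃ c : Fin n → Fin k, ∀ i,
        ({v | c v = i} : Set (Fin n)).Pairwise (fun u w => ¬ G.Adj u w) ∧
          IsGenPosSet G {v | c v = i}} = igpChromatic G from rfl, hG] at hamem
    obtain ⟨c, hc⟩ := hamem
    have hcol : G.Colorable a := by
      refine ⟨SimpleGraph.Coloring.mk c ?_⟩
      intro u w hadj heq
      exact (hc (c u)).1 rfl heq.symm (G.ne_of_adj hadj) hadj
    have hcf : G.CliqueFree (a + 1) := hcol.cliqueFree (Nat.lt_succ_self a)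
    have htm := SimpleGraph.isTuranMaximal_turanGraph (n := n) (r := a) ha0
    have hle : G.edgeFinset.card ≤ (turanGraph n a).edgeFinset.card := htm.2 (G' := G) hcf
    constructor
    · rw [hcard G, hcard (turanGraph n a)]; exact hle
    · intro heq
      rw [hcard G, hcard (turanGraph n a)] at heq
      have hGtm : G.IsTuranMaximal a :=
        ⟨hcf, fun ⦃H⦄ _ hH => (htm.2 (G' := H) hH).trans (le_of_eq heq.symm)⟩
      have := hGtm.nonempty_iso_turanGraph
      rwa [Fintype.card_fin] at this
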